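/- arXiv:2209.09321 — 2 statements merged into one kernel-verified Lean document; each statement's English description precedes it below -/
import Mathlib

section
/- Let U₀ ⊆ ℝ^n be nonempty and compact and A ∈ ℝ^{n×n}. Then for all s, t ≥ 0 the particular solution set satisfies the decomposition P_U(s+t) = P_U(s) ⊕ e^{A·s}·P_U(t), where ⊕ denotes the Minkowski sum and e^{A·s}·P_U(t) = {e^{A·s}·x : x ∈ P_U(t)}. -/
open scoped Pointwise

/-- Matrix exponential. -/
noncomputable def mexp {n : ℕ} (A : Matrix (Fin n) (Fin n) ℝ) : Matrix (Fin n) (Fin n) ℝ :=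
  NormedSpace.exp A

/-- Matrix-vector multiplication on Euclidean space. -/
noncomputable def mvE {m n : ℕ} (M : Matrix (Fin m) (Fin n) ℝ)
    (x : EuclideanSpace ℝ (Fin n)) : EuclideanSpace ℝ (Fin m) :=
  Matrix.toEuclideanLin M x

/-- Image of a set under a matrix: M·S = {M·s : s ∈ S}. -/
noncomputable def imgM {m n : ℕ} (M : Matrix (Fin m) (Fin n) ℝ)
    (S : Set (EuclideanSpace ℝ (Fin n))) : Set (EuclideanSpace ℝ (Fin m)) :=
  mvE M '' S

/-- Zonotope with center `c` and generator matrix `G`. -/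
noncomputable def zono {n p : ℕ} (c : EuclideanSpace ℝ (Fin n))
    (G : Matrix (Fin n) (Fin p) ℝ) : Set (EuclideanSpace ℝ (Fin n)) :=
  {x | ∃ α : EuclideanSpace ℝ (Fin p), (∀ i, α i ∈ Set.Icc (-1 : ℝ) 1) ∧ x = c + mvE G α}

/-- Linear combination of two sets. -/
def linComb {n : ℕ} (S1 S2 : Set (EuclideanSpace ℝ (Fin n))) :
    Set (EuclideanSpace ℝ (Fin n)) :=
  {x | ∃ s1 ∈ S1, ∃ s2 ∈ S2, ∃ lam ∈ Set.Icc (0 : ℝ) 1, x = lam • s1 + (1 - lam) • s2}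

/-- Tightest axis-aligned interval enclosure of a set. -/
noncomputable def box {n : ℕ} (S : Set (EuclideanSpace ℝ (Fin n))) :
    Set (EuclideanSpace ℝ (Fin n)) :=
  {x | ∀ i, x i ∈ Set.Icc (sInf ((fun y => y i) '' S)) (sSup ((fun y => y i) '' S))}

/-- Radius of the smallest origin-centered enclosing hypersphere. -/
noncomputable def rad {n : ℕ} (S : Set (EuclideanSpace ℝ (Fin n))) : ℝ :=
  sSup ((fun x => ‖x‖) '' S)

/-- err(S) = rad(box(S)). -/
noncomputable def err {n : ℕ} (S : Set (EuclideanSpace ℝ (Fin n))) : ℝ := rad (box S)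

/-- Spectral norm (operator 2-norm) of a matrix. -/
noncomputable def specNorm {m n : ℕ} (M : Matrix (Fin m) (Fin n) ℝ) : ℝ :=
  ‖LinearMap.toContinuousLinearMap (Matrix.toEuclideanLin M)‖

/-- Particular solution set P_U(t). -/
noncomputable def PU {n : ℕ} (U0 : Set (EuclideanSpace ℝ (Fin n)))
    (A : Matrix (Fin n) (Fin n) ℝ) (t : ℝ) : Set (EuclideanSpace ℝ (Fin n)) :=
  {x | ∃ u : ℝ → EuclideanSpace ℝ (Fin n), Measurable u ∧ (∀ θ ∈ Set.Icc 0 t, u θ ∈ U0) ∧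
    x = ∫ θ in (0 : ℝ)..t, mvE (mexp ((t - θ) • A)) (u θ)}

/-- Entrywise integral ∫₀^t e^{A·σ} dσ of the matrix exponential. -/
noncomputable def intExp {n : ℕ} (A : Matrix (Fin n) (Fin n) ℝ) (t : ℝ) :
    Matrix (Fin n) (Fin n) ℝ :=
  Matrix.of fun i j => ∫ σ in (0 : ℝ)..t, mexp (σ • A) i j

/-- Entrywise absolute value of a matrix. -/
def entAbs {m n : ℕ} (M : Matrix (Fin m) (Fin n) ℝ) : Matrix (Fin m) (Fin n) ℝ :=
  Matrix.of fun i j => |M i j|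

/-- Exponential remainder matrix E(Δt,η). -/
noncomputable def Eexp {n : ℕ} (A : Matrix (Fin n) (Fin n) ℝ) (dt : ℝ) (η : ℕ) :
    Matrix (Fin n) (Fin n) ℝ :=
  mexp (dt • entAbs A) -
    ∑ i ∈ Finset.range (η + 1), ((Nat.factorial i : ℝ)⁻¹) • (dt • entAbs A) ^ i

/-- Ã_i = A^i·Δt^{i+1}/(i+1)!. -/
noncomputable def Atilde {n : ℕ} (A : Matrix (Fin n) (Fin n) ℝ) (dt : ℝ) (i : ℕ) :
    Matrix (Fin n) (Fin n) ℝ :=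
  (dt ^ (i + 1) / (Nat.factorial (i + 1) : ℝ)) • A ^ i

/-- D(Δt) = {Δt·M·u : |M| ≤ E(Δt,η) entrywise, u ∈ U₀}. -/
noncomputable def Dset {n : ℕ} (A : Matrix (Fin n) (Fin n) ℝ) (dt : ℝ) (η : ℕ)
    (U0 : Set (EuclideanSpace ℝ (Fin n))) : Set (EuclideanSpace ℝ (Fin n)) :=
  {x | ∃ M : Matrix (Fin n) (Fin n) ℝ, (∀ i j, |M i j| ≤ Eexp A dt η i j) ∧
    ∃ u ∈ U0, x = dt • mvE M u}

/-- P̂(Δt) = Ã_0·U₀ ⊕ … ⊕ Ã_η·U₀ ⊕ D(Δt). -/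
noncomputable def PhatSet {n : ℕ} (A : Matrix (Fin n) (Fin n) ℝ) (dt : ℝ) (η : ℕ)
    (U0 : Set (EuclideanSpace ℝ (Fin n))) : Set (EuclideanSpace ℝ (Fin n)) :=
  (∑ i ∈ Finset.range (η + 1), imgM (Atilde A dt i) U0) + Dset A dt η U0

/-- One-step accumulating error bound ε̂(Δt). -/
noncomputable def ehatStep {n : ℕ} (A : Matrix (Fin n) (Fin n) ℝ) (t : ℝ) (η : ℕ)
    (U0 : Set (EuclideanSpace ℝ (Fin n))) (dt : ℝ) : ℝ :=
  err (imgM (mexp (t • A)) (imgM (∑ i ∈ Finset.Icc 1 η, Atilde A dt i) U0 + Dset A dt η U0)) +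
  err (imgM (mexp (t • A)) ((∑ i ∈ Finset.Icc 1 η, imgM (Atilde A dt i) U0) + Dset A dt η U0))

/-- Scalar interval I_i(Δt). -/
noncomputable def Iint (i : ℕ) (dt : ℝ) : Set ℝ :=
  Set.Icc (((i : ℝ) ^ (-(i : ℝ) / ((i : ℝ) - 1)) - (i : ℝ) ^ (-(1 : ℝ) / ((i : ℝ) - 1))) * dt ^ i) 0

/-- Interval matrix F_x(Δt). -/
noncomputable def Fx {n : ℕ} (A : Matrix (Fin n) (Fin n) ℝ) (η : ℕ) (dt : ℝ) :
    Set (Matrix (Fin n) (Fin n) ℝ) :=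
  {M | ∃ τ : ℕ → ℝ, (∀ i ∈ Finset.Icc 2 η, τ i ∈ Iint i dt) ∧
    ∃ R : Matrix (Fin n) (Fin n) ℝ, (∀ i j, |R i j| ≤ Eexp A dt η i j) ∧
    M = (∑ i ∈ Finset.Icc 2 η, (τ i / (Nat.factorial i : ℝ)) • A ^ i) + R}

/-- Interval matrix F_u(Δt). -/
noncomputable def Fu {n : ℕ} (A : Matrix (Fin n) (Fin n) ℝ) (η : ℕ) (dt : ℝ) :
    Set (Matrix (Fin n) (Fin n) ℝ) :=
  {N | ∃ τ : ℕ → ℝ, (∀ i ∈ Finset.Icc 2 (η + 1), τ i ∈ Iint i dt) ∧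
    ∃ R : Matrix (Fin n) (Fin n) ℝ, (∀ i j, |R i j| ≤ Eexp A dt η i j) ∧
    N = (∑ i ∈ Finset.Icc 2 (η + 1), (τ i / (Nat.factorial i : ℝ)) • A ^ (i - 1)) + dt • R}

/-- Curvature enclosure set C(Δt). -/
noncomputable def Cset {n p : ℕ} (A : Matrix (Fin n) (Fin n) ℝ) (η : ℕ) (dt : ℝ)
    (ch : EuclideanSpace ℝ (Fin n)) (Gh : Matrix (Fin n) (Fin p) ℝ)
    (utld : EuclideanSpace ℝ (Fin n)) : Set (EuclideanSpace ℝ (Fin n)) :=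
  {y | ∃ M ∈ Fx A η dt, ∃ N ∈ Fu A η dt, ∃ x ∈ zono ch Gh, y = mvE M x + mvE N utld}

/-- ε_hom(Δt). -/
noncomputable def ehom {n p : ℕ} (A : Matrix (Fin n) (Fin n) ℝ) (η : ℕ)
    (ch : EuclideanSpace ℝ (Fin n)) (Gh : Matrix (Fin n) (Fin p) ℝ)
    (utld : EuclideanSpace ℝ (Fin n)) (dt : ℝ) : ℝ :=
  2 * err (Cset A η dt ch Gh utld) + Real.sqrt p * specNorm ((mexp (dt • A) - 1) * Gh)

/-- ε_U(Δt) = err(e^{A·t}·P̂(Δt)). -/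
noncomputable def errPhat {n : ℕ} (A : Matrix (Fin n) (Fin n) ℝ) (t : ℝ) (η : ℕ)
    (U0 : Set (EuclideanSpace ℝ (Fin n))) (dt : ℝ) : ℝ :=
  err (imgM (mexp (t • A)) (PhatSet A dt η U0))

section PUAux

open MeasureTheory intervalIntegral

variable {n : ℕ}

/-- `mvE` as a continuous linear map. -/
noncomputable def clmOf (M : Matrix (Fin n) (Fin n) ℝ) :
    EuclideanSpace ℝ (Fin n) →L[ℝ] EuclideanSpace ℝ (Fin n) :=
  LinearMap.toContinuousLinearMap (Matrix.toEuclideanLin M)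

lemma clmOf_apply (M : Matrix (Fin n) (Fin n) ℝ) (x : EuclideanSpace ℝ (Fin n)) :
    clmOf M x = mvE M x := rfl

lemma mvE_mul (M N : Matrix (Fin n) (Fin n) ℝ) (x : EuclideanSpace ℝ (Fin n)) :
    mvE (M * N) x = mvE M (mvE N x) := by
  simp [mvE, Matrix.toEuclideanLin_apply, Matrix.mulVec_mulVec]

lemma mexp_add_smul (A : Matrix (Fin n) (Fin n) ℝ) (a b : ℝ) :
    mexp ((a + b) • A) = mexp (a • A) * mexp (b • A) := by
  rw [mexp, mexp, mexp, add_smul]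
  exact Matrix.exp_add_of_commute _ _ (((Commute.refl A).smul_left a).smul_right b)

lemma continuous_clmOf : Continuous (fun M : Matrix (Fin n) (Fin n) ℝ => clmOf M) :=
  LinearMap.continuous_of_finiteDimensional
    (((LinearMap.toContinuousLinearMap (𝕜 := ℝ) (E := EuclideanSpace ℝ (Fin n))
      (F' := EuclideanSpace ℝ (Fin n))).toLinearMap).comp
      (Matrix.toEuclideanLin (m := Fin n) (n := Fin n) (𝕜 := ℝ)).toLinearMap)

lemma continuous_matexp :
    Continuous (fun M : Matrix (Fin n) (Fin n) ℝ => NormedSpace.exp M) := by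
  letI : SeminormedRing (Matrix (Fin n) (Fin n) ℝ) := Matrix.linftyOpSemiNormedRing
  letI : NormedRing (Matrix (Fin n) (Fin n) ℝ) := Matrix.linftyOpNormedRing
  letI : NormedAlgebra ℝ (Matrix (Fin n) (Fin n) ℝ) := Matrix.linftyOpNormedAlgebra
  letI : NormedAlgebra ℚ (Matrix (Fin n) (Fin n) ℝ) := NormedAlgebra.restrictScalars ℚ ℝ _
  exact NormedSpace.exp_continuous

lemma continuous_mexpFun (A : Matrix (Fin n) (Fin n) ℝ) (c : ℝ) :
    Continuous (fun θ : ℝ => clmOf (mexp ((c - θ) • A))) := by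
  refine continuous_clmOf.comp ?_
  unfold mexp
  exact continuous_matexp.comp (by fun_prop)

lemma integrable_aux {U0 : Set (EuclideanSpace ℝ (Fin n))} (hcomp : IsCompact U0)
    (A : Matrix (Fin n) (Fin n) ℝ) (c a b : ℝ)
    {u : ℝ → EuclideanSpace ℝ (Fin n)} (hu : Measurable u)
    (hmem : ∀ θ ∈ Set.Icc a b, u θ ∈ U0) (hab : a ≤ b) :
    IntervalIntegrable (fun θ => mvE (mexp ((c - θ) • A)) (u θ)) volume a b := by
  obtain ⟨Cu, hCu⟩ := hcomp.isBounded.exists_norm_le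
  obtain ⟨CF, hCF⟩ := (isCompact_Icc (a := a) (b := b)).exists_bound_of_continuousOn
    ((continuous_mexpFun A c).continuousOn)
  have hmeas : Measurable (fun θ => mvE (mexp ((c - θ) • A)) (u θ)) := by
    have hc : Continuous (fun p : (EuclideanSpace ℝ (Fin n) →L[ℝ] EuclideanSpace ℝ (Fin n)) ×
        EuclideanSpace ℝ (Fin n) => p.1 p.2) := isBoundedBilinearMap_apply.continuous
    exact hc.measurable.comp (((continuous_mexpFun A c).measurable).prodMk hu)
  rw [intervalIntegrable_iff_integrableOn_Icc_of_le hab]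
  refine Integrable.mono' (g := fun _ => (max CF 0) * Cu) (integrableOn_const ?_)
    hmeas.aestronglyMeasurable ?_
  · exact measure_Icc_lt_top.ne
  · filter_upwards [ae_restrict_mem measurableSet_Icc] with θ hθ
    calc ‖mvE (mexp ((c - θ) • A)) (u θ)‖
        = ‖clmOf (mexp ((c - θ) • A)) (u θ)‖ := rfl
      _ ≤ ‖clmOf (mexp ((c - θ) • A))‖ * ‖u θ‖ := (clmOf _).le_opNorm _
      _ ≤ (max CF 0) * Cu :=
          mul_le_mul (le_max_of_le_left (hCF θ hθ)) (hCu _ (hmem θ hθ))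
            (norm_nonneg _) (le_max_right _ _)

lemma split1 {U0 : Set (EuclideanSpace ℝ (Fin n))} (hcomp : IsCompact U0)
    (A : Matrix (Fin n) (Fin n) ℝ) (s t : ℝ) (ht : 0 ≤ t)
    {u : ℝ → EuclideanSpace ℝ (Fin n)} (hu : Measurable u)
    (hmem : ∀ θ ∈ Set.Icc 0 t, u θ ∈ U0) :
    (∫ θ in (0:ℝ)..t, mvE (mexp ((s + t - θ) • A)) (u θ))
      = mvE (mexp (s • A)) (∫ θ in (0:ℝ)..t, mvE (mexp ((t - θ) • A)) (u θ)) := by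
  have hInt := integrable_aux hcomp A t 0 t hu hmem ht
  calc (∫ θ in (0:ℝ)..t, mvE (mexp ((s + t - θ) • A)) (u θ))
      = ∫ θ in (0:ℝ)..t, clmOf (mexp (s • A)) (mvE (mexp ((t - θ) • A)) (u θ)) := by
        refine intervalIntegral.integral_congr fun θ _ => ?_
        rw [clmOf_apply, ← mvE_mul, ← mexp_add_smul, show s + (t - θ) = s + t - θ by ring]
    _ = clmOf (mexp (s • A)) (∫ θ in (0:ℝ)..t, mvE (mexp ((t - θ) • A)) (u θ)) :=
        ContinuousLinearMap.intervalIntegral_comp_comm _ hInt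
    _ = mvE (mexp (s • A)) (∫ θ in (0:ℝ)..t, mvE (mexp ((t - θ) • A)) (u θ)) := rfl

lemma split2 (A : Matrix (Fin n) (Fin n) ℝ) (s t : ℝ)
    (u : ℝ → EuclideanSpace ℝ (Fin n)) :
    (∫ θ in t..(s + t), mvE (mexp ((s + t - θ) • A)) (u θ))
      = ∫ θ in (0:ℝ)..s, mvE (mexp ((s - θ) • A)) (u (θ + t)) := by
  have h := intervalIntegral.integral_comp_add_right (a := (0:ℝ)) (b := s)
    (fun θ => mvE (mexp ((s + t - θ) • A)) (u θ)) t
  rw [zero_add] at h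
  rw [← h]
  refine intervalIntegral.integral_congr fun θ _ => ?_
  rw [show s + t - (θ + t) = s - θ by ring]

end PUAux

/-- semigroup decomposition of the particular solution set,
`P_U(s + t) = P_U(s) ⊕ e^{A·s}·P_U(t)`. -/
theorem PU_decomposition {n : ℕ} (U0 : Set (EuclideanSpace ℝ (Fin n)))
    (hne : U0.Nonempty) (hcomp : IsCompact U0)
    (A : Matrix (Fin n) (Fin n) ℝ) (s t : ℝ) (hs : 0 ≤ s) (ht : 0 ≤ t) :
    PU U0 A (s + t) = PU U0 A s + imgM (mexp (s • A)) (PU U0 A t) := by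
  ext x
  simp only [PU, Set.mem_add, Set.mem_setOf_eq, imgM, Set.mem_image]
  constructor
  · rintro ⟨u, hmeas, hmem, rfl⟩
    have hmem1 : ∀ θ ∈ Set.Icc (0:ℝ) t, u θ ∈ U0 := fun θ hθ =>
      hmem θ ⟨hθ.1, by linarith [hθ.2]⟩
    have hmem2 : ∀ θ ∈ Set.Icc t (s + t), u θ ∈ U0 := fun θ hθ =>
      hmem θ ⟨by linarith [hθ.1], hθ.2⟩
    have h1 := integrable_aux hcomp A (s + t) 0 t hmeas hmem1 ht
    have h2 := integrable_aux hcomp A (s + t) t (s + t) hmeas hmem2 (by linarith)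
    refine ⟨∫ θ in t..(s + t), mvE (mexp ((s + t - θ) • A)) (u θ),
      ⟨fun θ => u (θ + t), hmeas.comp (measurable_add_const t),
        fun θ hθ => hmem _ ⟨by linarith [hθ.1], by linarith [hθ.2]⟩,
        (split2 A s t u).symm ▸ rfl⟩,
      ∫ θ in (0:ℝ)..t, mvE (mexp ((s + t - θ) • A)) (u θ),
      ⟨∫ θ in (0:ℝ)..t, mvE (mexp ((t - θ) • A)) (u θ),
        ⟨u, hmeas, hmem1, rfl⟩, (split1 hcomp A s t ht hmeas hmem1).symm⟩, ?_⟩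
    rw [add_comm]
    exact intervalIntegral.integral_add_adjacent_intervals h1 h2
  · rintro ⟨x1, ⟨u1, hm1, hmem1, rfl⟩, x2, ⟨y, ⟨u2, hm2, hmem2, rfl⟩, rfl⟩, rfl⟩
    classical
    set u : ℝ → EuclideanSpace ℝ (Fin n) := fun θ => if θ < t then u2 θ else u1 (θ - t) with hudef
    have hmeas : Measurable u :=
      Measurable.ite measurableSet_Iio hm2 (hm1.comp (measurable_sub_const t))
    have hmemU : ∀ θ ∈ Set.Icc (0:ℝ) (s + t), u θ ∈ U0 := by
      intro θ hθ
      by_cases h : θ < t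
      · simpa [u, h] using hmem2 θ ⟨hθ.1, h.le⟩
      · simpa [u, h] using hmem1 (θ - t) ⟨by linarith [not_lt.mp h], by linarith [hθ.2]⟩
    refine ⟨u, hmeas, hmemU, ?_⟩
    have h1 := integrable_aux hcomp A (s + t) 0 t hmeas
      (fun θ hθ => hmemU θ ⟨hθ.1, by linarith [hθ.2]⟩) ht
    have h2 := integrable_aux hcomp A (s + t) t (s + t) hmeas
      (fun θ hθ => hmemU θ ⟨by linarith [hθ.1], hθ.2⟩) (by linarith)
    rw [← intervalIntegral.integral_add_adjacent_intervals h1 h2]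
    have e1 : (∫ θ in (0:ℝ)..t, mvE (mexp ((s + t - θ) • A)) (u θ))
        = mvE (mexp (s • A)) (∫ θ in (0:ℝ)..t, mvE (mexp ((t - θ) • A)) (u2 θ)) := by
      rw [← split1 hcomp A s t ht hm2 hmem2]
      refine intervalIntegral.integral_congr_ae ?_
      have hne : ∀ᵐ θ : ℝ ∂MeasureTheory.volume, θ ≠ t := by
        rw [MeasureTheory.ae_iff]
        simpa [not_not, Set.setOf_eq_eq_singleton] using
          (MeasureTheory.measure_singleton t)
      filter_upwards [hne] with θ hθ hθm
      rw [Set.uIoc_of_le (by linarith : (0:ℝ) ≤ t)] at hθm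
      have hlt : θ < t := lt_of_le_of_ne hθm.2 hθ
      simp [u, hlt]
    have e2 : (∫ θ in t..(s + t), mvE (mexp ((s + t - θ) • A)) (u θ))
        = ∫ θ in (0:ℝ)..s, mvE (mexp ((s - θ) • A)) (u1 θ) := by
      rw [split2 A s t u]
      refine intervalIntegral.integral_congr fun θ hθ => ?_
      rw [Set.uIcc_of_le hs] at hθ
      have hnlt : ¬ (θ + t < t) := by linarith [hθ.1]
      simp [u, hnlt]
    rw [e1, e2, add_comm]
end

section
/- Let U₀ = {G_u·α : α ∈ [-1,1]^m} ⊆ ℝ^n be a zonotope centered at the origin, A ∈ ℝ^{n×n}, t ≥ 0, Δt > 0, and let η ≥ 1 be an integer. Set Ã_i = A^i·Δt^{i+1}/(i+1)! for i ≥ 0, D(Δt) = { Δt·M·u : M ∈ ℝ^{n×n} with |M| ≤ E(Δt,η) entrywise, u ∈ U₀ }, and P̂(Δt) = Ã_0·U₀ ⊕ Ã_1·U₀ ⊕ … ⊕ Ã_η·U₀ ⊕ D(Δt). Assume P_U(Δt) ⊆ P̂(Δt). Then d_H( e^{A·t}·P_U(Δt), e^{A·t}·P̂(Δt) ) ≤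 err( e^{A·t}·( (Σ_{i=1}^{η} Ã_i)·U₀ ⊕ D(Δt) ) ) + err( e^{A·t}·( Ã_1·U₀ ⊕ … ⊕ Ã_η·U₀ ⊕ D(Δt) ) ). -/
open scoped Pointwise

/-! ### Auxiliary lemmas -/

section Aux

open scoped Pointwise

lemma mvE_apply' {m n : ℕ} (M : Matrix (Fin m) (Fin n) ℝ) (x : EuclideanSpace ℝ (Fin n))
    (i : Fin m) : mvE M x i = ∑ j, M i j * x j := by
  simp [mvE, Matrix.toEuclideanLin_apply, Matrix.mulVec, dotProduct]

lemma mvE_add_mat {m n : ℕ} (M N : Matrix (Fin m) (Fin n) ℝ) (x : EuclideanSpace ℝ (Fin n)) :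
    mvE (M + N) x = mvE M x + mvE N x := by
  simp [mvE, map_add, LinearMap.add_apply]

lemma mvE_zero_mat {m n : ℕ} (x : EuclideanSpace ℝ (Fin n)) :
    mvE (0 : Matrix (Fin m) (Fin n) ℝ) x = 0 := by
  simp [mvE]

lemma mvE_matsum {ι : Type*} {m n : ℕ} (s : Finset ι) (F : ι → Matrix (Fin m) (Fin n) ℝ)
    (x : EuclideanSpace ℝ (Fin n)) : mvE (∑ i ∈ s, F i) x = ∑ i ∈ s, mvE (F i) x := by
  classical
  induction s using Finset.induction with
  | empty => simpa using mvE_zero_mat x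
  | insert _ _ hnot ih =>
    rw [Finset.sum_insert hnot, Finset.sum_insert hnot, mvE_add_mat, ih]

lemma mvE_sub {m n : ℕ} (M : Matrix (Fin m) (Fin n) ℝ) (x y : EuclideanSpace ℝ (Fin n)) :
    mvE M (x - y) = mvE M x - mvE M y := by
  simp [mvE, map_sub]

lemma mvE_zero_vec {m n : ℕ} (M : Matrix (Fin m) (Fin n) ℝ) :
    mvE M (0 : EuclideanSpace ℝ (Fin n)) = 0 := by
  simp [mvE]

lemma abs_coord_le_norm {n : ℕ} (x : EuclideanSpace ℝ (Fin n)) (i : Fin n) : |x i| ≤ ‖x‖ := by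
  rw [EuclideanSpace.norm_eq]
  rw [← Real.sqrt_sq_eq_abs]
  apply Real.sqrt_le_sqrt
  exact Finset.single_le_sum (f := fun j => ‖x j‖^2) (fun j _ => by positivity)
    (Finset.mem_univ i) |>.trans_eq' (by simp)

lemma norm_le_sum_abs {n : ℕ} (x : EuclideanSpace ℝ (Fin n)) : ‖x‖ ≤ ∑ i, |x i| := by
  rw [EuclideanSpace.norm_eq]
  have h : ∑ i, ‖x i‖^2 ≤ (∑ i, |x i|)^2 := by
    simp only [Real.norm_eq_abs]
    exact Finset.sum_sq_le_sq_sum_of_nonneg (fun i _ => abs_nonneg _)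
  calc Real.sqrt (∑ i, ‖x i‖^2) ≤ Real.sqrt ((∑ i, |x i|)^2) := Real.sqrt_le_sqrt h
    _ = ∑ i, |x i| := Real.sqrt_sq (Finset.sum_nonneg fun i _ => abs_nonneg _)

lemma mvE_norm_le {m n : ℕ} (M : Matrix (Fin m) (Fin n) ℝ) (x : EuclideanSpace ℝ (Fin n)) :
    ‖mvE M x‖ ≤ (∑ i, ∑ j, |M i j|) * ‖x‖ := by
  calc ‖mvE M x‖ ≤ ∑ i, |mvE M x i| := norm_le_sum_abs _
    _ ≤ ∑ i, ∑ j, |M i j| * ‖x‖ := by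
        apply Finset.sum_le_sum
        intro i _
        rw [mvE_apply']
        calc |∑ j, M i j * x j| ≤ ∑ j, |M i j * x j| := Finset.abs_sum_le_sum_abs _ _
          _ ≤ ∑ j, |M i j| * ‖x‖ := by
              apply Finset.sum_le_sum
              intro j _
              rw [abs_mul]
              exact mul_le_mul_of_nonneg_left (abs_coord_le_norm x j) (abs_nonneg _)
    _ = (∑ i, ∑ j, |M i j|) * ‖x‖ := by rw [Finset.sum_mul]; simp [Finset.sum_mul]

/-! #### entrywise matrix facts -/

lemma entry_pow_le {n : ℕ} (A : Matrix (Fin n) (Fin n) ℝ) (k : ℕ) (i j : Fin n) :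
    |(A ^ k) i j| ≤ (∑ a, ∑ b, |A a b| + 1) ^ k := by
  induction k generalizing i j with
  | zero => by_cases h : i = j <;> simp [Matrix.one_apply, h]
  | succ k ih =>
    have h1 : (0:ℝ) ≤ ∑ a, ∑ b, |A a b| :=
      Finset.sum_nonneg fun a _ => Finset.sum_nonneg fun b _ => abs_nonneg _
    rw [pow_succ, Matrix.mul_apply]
    calc |∑ l, (A ^ k) i l * A l j| ≤ ∑ l, |(A ^ k) i l * A l j| := Finset.abs_sum_le_sum_abs _ _
      _ ≤ ∑ l, (∑ a, ∑ b, |A a b| + 1) ^ k * |A l j| := by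
          apply Finset.sum_le_sum; intro l _
          rw [abs_mul]
          exact mul_le_mul_of_nonneg_right (ih i l) (abs_nonneg _)
      _ = (∑ a, ∑ b, |A a b| + 1) ^ k * ∑ l, |A l j| := by rw [← Finset.mul_sum]
      _ ≤ (∑ a, ∑ b, |A a b| + 1) ^ k * (∑ a, ∑ b, |A a b| + 1) := by
          apply mul_le_mul_of_nonneg_left _ (by positivity)
          have : ∑ l, |A l j| ≤ ∑ a, ∑ b, |A a b| := by
            apply Finset.sum_le_sum; intro l _
            exact Finset.single_le_sum (f := fun b => |A l b|) (fun b _ => abs_nonneg _)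
              (Finset.mem_univ j)
          linarith
      _ = (∑ a, ∑ b, |A a b| + 1) ^ (k+1) := by rw [pow_succ]

lemma entAbs_pow_nonneg {n : ℕ} (A : Matrix (Fin n) (Fin n) ℝ) (p : ℕ) (i j : Fin n) :
    0 ≤ (entAbs A ^ p) i j := by
  induction p generalizing i j with
  | zero => by_cases h : i = j <;> simp [Matrix.one_apply, h]
  | succ p ih =>
    rw [pow_succ, Matrix.mul_apply]
    exact Finset.sum_nonneg fun l _ => mul_nonneg (ih i l) (abs_nonneg _)

lemma abs_pow_le_entAbs_pow {n : ℕ} (A : Matrix (Fin n) (Fin n) ℝ) (p : ℕ) (i j : Fin n) :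
    |(A ^ p) i j| ≤ (entAbs A ^ p) i j := by
  induction p generalizing i j with
  | zero => by_cases h : i = j <;> simp [Matrix.one_apply, h]
  | succ p ih =>
    rw [pow_succ, pow_succ, Matrix.mul_apply, Matrix.mul_apply]
    calc |∑ l, (A ^ p) i l * A l j| ≤ ∑ l, |(A ^ p) i l * A l j| := Finset.abs_sum_le_sum_abs _ _
      _ ≤ ∑ l, (entAbs A ^ p) i l * entAbs A l j := by
          apply Finset.sum_le_sum; intro l _
          rw [abs_mul]
          exact mul_le_mul (ih i l) (le_of_eq rfl) (abs_nonneg _) (entAbs_pow_nonneg A p i l)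

/-! #### summability and the exponential series entrywise -/

set_option maxHeartbeats 1000000 in
lemma summable_entry_exp' {n : ℕ} (A : Matrix (Fin n) (Fin n) ℝ) (i j : Fin n) :
    Summable fun k : ℕ => (k.factorial : ℝ)⁻¹ * (A ^ k) i j := by
  have hg : Summable (fun k : ℕ => (∑ a, ∑ b, |A a b| + 1) ^ k / (k.factorial : ℝ)) :=
    Real.summable_pow_div_factorial _
  apply Summable.of_abs
  apply hg.of_nonneg_of_le (fun k => abs_nonneg _)
  intro k
  rw [abs_mul, abs_inv, Nat.abs_cast, div_eq_inv_mul]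
  exact mul_le_mul_of_nonneg_left (entry_pow_le A k i j) (by positivity)

set_option maxHeartbeats 1000000 in
lemma summable_entry_exp {n : ℕ} (A : Matrix (Fin n) (Fin n) ℝ) (i j : Fin n) :
    Summable fun k : ℕ => ((k.factorial : ℝ)⁻¹ • A ^ k) i j := by
  simpa [Matrix.smul_apply] using summable_entry_exp' A i j

lemma summable_exp_matrix {n : ℕ} (A : Matrix (Fin n) (Fin n) ℝ) :
    Summable fun k : ℕ => (k.factorial : ℝ)⁻¹ • A ^ k := by
  rw [show (Summable fun k : ℕ => (k.factorial : ℝ)⁻¹ • A ^ k) ↔ _ from Pi.summable]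
  intro i
  rw [Pi.summable]
  intro j
  exact summable_entry_exp A i j

lemma mexp_apply {n : ℕ} (A : Matrix (Fin n) (Fin n) ℝ) (i j : Fin n) :
    mexp A i j = ∑' k : ℕ, (k.factorial : ℝ)⁻¹ * (A ^ k) i j := by
  have h := summable_exp_matrix A
  have h2 : mexp A = ∑' k : ℕ, (k.factorial : ℝ)⁻¹ • A ^ k := by
    rw [mexp, NormedSpace.exp_eq_tsum ℝ]
  rw [h2]
  refine ((congrFun (tsum_apply h (x := i)) j).trans (tsum_apply (Pi.summable.mp h i))).trans ?_
  simp [Matrix.smul_apply]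

set_option maxHeartbeats 1000000 in
lemma summable_f {n : ℕ} (A : Matrix (Fin n) (Fin n) ℝ) (dt : ℝ) (i j : Fin n) :
    Summable fun k : ℕ => dt ^ (k+1) / ((k+1).factorial : ℝ) * (A ^ k) i j := by
  have hg : Summable (fun k : ℕ =>
      |dt| * ((|dt| * (∑ a, ∑ b, |A a b| + 1)) ^ k / (k.factorial : ℝ))) :=
    (Real.summable_pow_div_factorial _).mul_left _
  apply Summable.of_abs
  apply hg.of_nonneg_of_le (fun k => abs_nonneg _)
  intro k
  have h1 : (0:ℝ) < k.factorial := by exact_mod_cast k.factorial_pos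
  have h2 : (k.factorial : ℝ) ≤ ((k+1).factorial : ℝ) := by
    exact_mod_cast Nat.factorial_le (Nat.le_succ k)
  rw [abs_mul, abs_div, abs_pow, Nat.abs_cast]
  calc |dt| ^ (k+1) / ((k+1).factorial : ℝ) * |(A ^ k) i j|
      ≤ |dt| ^ (k+1) / (k.factorial : ℝ) * (∑ a, ∑ b, |A a b| + 1) ^ k := by
        apply mul_le_mul
        · apply div_le_div_of_nonneg_left (by positivity) h1 h2
        · exact entry_pow_le A k i j
        · exact abs_nonneg _
        · positivity
    _ = |dt| * ((|dt| * (∑ a, ∑ b, |A a b| + 1)) ^ k / (k.factorial : ℝ)) := by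
        rw [mul_pow, pow_succ]; ring

/-! #### the remainder matrix -/

noncomputable def Mrem {n : ℕ} (A : Matrix (Fin n) (Fin n) ℝ) (dt : ℝ) (η : ℕ) :
    Matrix (Fin n) (Fin n) ℝ :=
  Matrix.of fun i j => ∑' k : ℕ,
    dt ^ (k + (η+1)) / (((k + (η+1)) + 1).factorial : ℝ) * (A ^ (k + (η+1))) i j

lemma Eexp_apply_eq {n : ℕ} (A : Matrix (Fin n) (Fin n) ℝ) (dt : ℝ) (η : ℕ) (i j : Fin n) :
    Eexp A dt η i j
      = ∑' k : ℕ, (((k + (η+1)).factorial : ℝ))⁻¹ * ((dt • entAbs A) ^ (k + (η+1))) i j := by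
  have hg := summable_entry_exp' (dt • entAbs A) i j
  have hsplit := Summable.sum_add_tsum_nat_add (f := fun k : ℕ => (k.factorial : ℝ)⁻¹ *
    ((dt • entAbs A) ^ k) i j) (η+1) hg
  have h1 : Eexp A dt η i j = mexp (dt • entAbs A) i j
      - ∑ k ∈ Finset.range (η+1), (k.factorial : ℝ)⁻¹ * ((dt • entAbs A) ^ k) i j := by
    simp [Eexp, Matrix.sub_apply, Matrix.sum_apply, Matrix.smul_apply]
  rw [h1, mexp_apply, ← hsplit]
  ring

lemma Eexp_entry_nonneg {n : ℕ} (A : Matrix (Fin n) (Fin n) ℝ) {dt : ℝ} (hdt : 0 ≤ dt)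
    (η : ℕ) (i j : Fin n) : 0 ≤ Eexp A dt η i j := by
  rw [Eexp_apply_eq]
  apply tsum_nonneg
  intro k
  apply mul_nonneg (by positivity)
  rw [smul_pow, Matrix.smul_apply, smul_eq_mul]
  exact mul_nonneg (by positivity) (entAbs_pow_nonneg A _ i j)

lemma term_le {n : ℕ} (A : Matrix (Fin n) (Fin n) ℝ) {dt : ℝ} (hdt : 0 ≤ dt) (p : ℕ)
    (i j : Fin n) :
    |dt ^ p / ((p+1).factorial : ℝ) * (A ^ p) i j|
      ≤ ((p.factorial : ℝ))⁻¹ * ((dt • entAbs A) ^ p) i j := by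
  rw [smul_pow, Matrix.smul_apply, smul_eq_mul, abs_mul, abs_div, abs_pow, Nat.abs_cast,
    abs_of_nonneg hdt]
  have h2 : (p.factorial : ℝ) ≤ ((p+1).factorial : ℝ) := by
    exact_mod_cast Nat.factorial_le (Nat.le_succ p)
  calc dt ^ p / ((p+1).factorial : ℝ) * |(A ^ p) i j|
      ≤ dt ^ p / (p.factorial : ℝ) * ((entAbs A) ^ p) i j := by
        apply mul_le_mul
        · exact div_le_div_of_nonneg_left (by positivity) (by exact_mod_cast p.factorial_pos) h2
        · exact abs_pow_le_entAbs_pow A p i j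
        · exact abs_nonneg _
        · positivity
    _ = ((p.factorial : ℝ))⁻¹ * (dt ^ p * (entAbs A ^ p) i j) := by ring

lemma summable_g_shift {n : ℕ} (A : Matrix (Fin n) (Fin n) ℝ) (dt : ℝ) (η : ℕ) (i j : Fin n) :
    Summable fun k : ℕ =>
      (((k + (η+1)).factorial : ℝ))⁻¹ * ((dt • entAbs A) ^ (k + (η+1))) i j :=
  (summable_nat_add_iff (f := fun k : ℕ => (k.factorial : ℝ)⁻¹ * ((dt • entAbs A) ^ k) i j)
    (η+1)).2 (summable_entry_exp' (dt • entAbs A) i j)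

lemma Mrem_abs_le {n : ℕ} (A : Matrix (Fin n) (Fin n) ℝ) {dt : ℝ} (hdt : 0 ≤ dt) (η : ℕ)
    (i j : Fin n) : |Mrem A dt η i j| ≤ Eexp A dt η i j := by
  have hgs := summable_g_shift A dt η i j
  have habs : Summable fun k : ℕ =>
      |dt ^ (k + (η+1)) / (((k + (η+1)) + 1).factorial : ℝ) * (A ^ (k + (η+1))) i j| := by
    apply hgs.of_nonneg_of_le (fun k => abs_nonneg _)
    intro k
    exact term_le A hdt (k + (η+1)) i j
  calc |Mrem A dt η i j| ≤ ∑' k : ℕ,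
        |dt ^ (k + (η+1)) / (((k + (η+1)) + 1).factorial : ℝ) * (A ^ (k + (η+1))) i j| := by
        have h0 : Mrem A dt η i j = ∑' k : ℕ,
            dt ^ (k + (η+1)) / (((k + (η+1)) + 1).factorial : ℝ) * (A ^ (k + (η+1))) i j := rfl
        rw [h0]
        exact norm_tsum_le_tsum_norm (f := fun k : ℕ =>
          dt ^ (k + (η+1)) / (((k + (η+1)) + 1).factorial : ℝ) * (A ^ (k + (η+1))) i j) habs
    _ ≤ ∑' k : ℕ, (((k + (η+1)).factorial : ℝ))⁻¹ * ((dt • entAbs A) ^ (k + (η+1))) i j :=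
        Summable.tsum_le_tsum (fun k => term_le A hdt (k + (η+1)) i j) habs hgs
    _ = Eexp A dt η i j := (Eexp_apply_eq A dt η i j).symm

lemma tsum_split {n : ℕ} (A : Matrix (Fin n) (Fin n) ℝ) (dt : ℝ) (η : ℕ) (i j : Fin n) :
    ∑' k : ℕ, dt ^ (k+1) / ((k+1).factorial : ℝ) * (A ^ k) i j
      = (∑ k ∈ Finset.range (η+1), dt ^ (k+1) / ((k+1).factorial : ℝ) * (A ^ k) i j)
        + dt * Mrem A dt η i j := by
  have hf := summable_f A dt i j
  rw [← Summable.sum_add_tsum_nat_add (η+1) hf]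
  congr 1
  rw [Mrem]
  simp only [Matrix.of_apply]
  rw [← tsum_mul_left]
  apply tsum_congr
  intro k
  rw [pow_succ']
  ring

/-! #### the interval integral -/

lemma fact_aux (k : ℕ) : ((k.factorial:ℝ))⁻¹ / (k+1) = (((k+1).factorial:ℝ))⁻¹ := by
  rw [Nat.factorial_succ]
  push_cast
  rw [mul_inv, div_eq_mul_inv, mul_comm]

lemma key_integral {n : ℕ} (A : Matrix (Fin n) (Fin n) ℝ) {dt : ℝ} (hdt : 0 < dt) (i j : Fin n) :
    ∫ σ in (0:ℝ)..dt, mexp (σ • A) i j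
      = ∑' k : ℕ, dt ^ (k+1) / ((k+1).factorial : ℝ) * (A ^ k) i j := by
  set C := ∑ a, ∑ b, |A a b| + 1 with hC
  have hC0 : (0:ℝ) ≤ C := by positivity
  set h : ℕ → ℝ → ℝ := fun k σ => (k.factorial : ℝ)⁻¹ * σ ^ k * (A ^ k) i j with hh
  have hcong : ∀ σ : ℝ, mexp (σ • A) i j = ∑' k, h k σ := by
    intro σ
    rw [mexp_apply]
    apply tsum_congr
    intro k
    rw [smul_pow, Matrix.smul_apply, smul_eq_mul]
    ring
  have hint : ∀ k : ℕ, MeasureTheory.Integrable (h k)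
      (MeasureTheory.volume.restrict (Set.Ioc 0 dt)) := by
    intro k
    exact ((continuous_const.mul (continuous_pow k)).mul continuous_const).integrableOn_Ioc
  have hval : ∀ k : ℕ, ∫ σ in Set.Ioc (0:ℝ) dt, h k σ
      = dt ^ (k+1) / ((k+1).factorial : ℝ) * (A ^ k) i j := by
    intro k
    rw [← intervalIntegral.integral_of_le hdt.le]
    simp only [hh]
    rw [intervalIntegral.integral_mul_const, intervalIntegral.integral_const_mul,
      integral_pow]
    rw [div_eq_mul_inv (dt ^ (k+1)), ← fact_aux k]
    ring
  have hnormval : ∀ k : ℕ, ∫ σ in Set.Ioc (0:ℝ) dt, ‖h k σ‖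
      = dt ^ (k+1) / ((k+1).factorial : ℝ) * |(A ^ k) i j| := by
    intro k
    have heq : ∀ σ ∈ Set.Ioc (0:ℝ) dt,
        ‖h k σ‖ = (k.factorial : ℝ)⁻¹ * σ ^ k * |(A ^ k) i j| := by
      intro σ hσ
      simp only [hh, Real.norm_eq_abs, abs_mul, abs_pow, abs_inv, Nat.abs_cast,
        abs_of_pos hσ.1]
    rw [MeasureTheory.setIntegral_congr_fun (by measurability) heq]
    rw [← intervalIntegral.integral_of_le hdt.le]
    rw [intervalIntegral.integral_mul_const, intervalIntegral.integral_const_mul,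
      integral_pow]
    rw [div_eq_mul_inv (dt ^ (k+1)), ← fact_aux k]
    ring
  have hsum : Summable fun k : ℕ => ∫ σ in Set.Ioc (0:ℝ) dt, ‖h k σ‖ := by
    simp only [hnormval]
    have hg : Summable (fun k : ℕ => dt * ((dt * C) ^ k / (k.factorial : ℝ))) :=
      (Real.summable_pow_div_factorial _).mul_left _
    apply hg.of_nonneg_of_le (fun k => by positivity)
    intro k
    have h2 : (k.factorial : ℝ) ≤ ((k+1).factorial : ℝ) := by
      exact_mod_cast Nat.factorial_le (Nat.le_succ k)
    calc dt ^ (k+1) / ((k+1).factorial : ℝ) * |(A ^ k) i j|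
        ≤ dt ^ (k+1) / (k.factorial : ℝ) * C ^ k := by
          apply mul_le_mul
          · exact div_le_div_of_nonneg_left (by positivity)
              (by exact_mod_cast k.factorial_pos) h2
          · exact entry_pow_le A k i j
          · exact abs_nonneg _
          · positivity
      _ = dt * ((dt * C) ^ k / (k.factorial : ℝ)) := by rw [mul_pow, pow_succ]; ring
  rw [intervalIntegral.integral_of_le hdt.le]
  calc ∫ σ in Set.Ioc (0:ℝ) dt, mexp (σ • A) i j
      = ∫ σ in Set.Ioc (0:ℝ) dt, ∑' k, h k σ := by
        apply MeasureTheory.integral_congr_ae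
        filter_upwards with σ using hcong σ
    _ = ∑' k, ∫ σ in Set.Ioc (0:ℝ) dt, h k σ :=
        (MeasureTheory.integral_tsum_of_summable_integral_norm hint hsum).symm
    _ = ∑' k : ℕ, dt ^ (k+1) / ((k+1).factorial : ℝ) * (A ^ k) i j := tsum_congr hval

open scoped Matrix in
lemma cont_entry {n : ℕ} (A : Matrix (Fin n) (Fin n) ℝ) (dt : ℝ) (i j : Fin n) :
    Continuous fun θ : ℝ => mexp ((dt - θ) • A) i j := by
  letI : NormedAddCommGroup (Matrix (Fin n) (Fin n) ℝ) := Matrix.linftyOpNormedAddCommGroup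
  letI : NormedRing (Matrix (Fin n) (Fin n) ℝ) := Matrix.linftyOpNormedRing
  letI : NormedAlgebra ℝ (Matrix (Fin n) (Fin n) ℝ) := Matrix.linftyOpNormedAlgebra
  have h1 : Continuous fun θ : ℝ => mexp ((dt - θ) • A) :=
    (continuous_iff_continuousAt.2 fun x => (NormedSpace.exp_analytic (𝕂 := ℝ) x).continuousAt).comp ((continuous_const.sub continuous_id).smul continuous_const)
  exact h1.matrix_elem i j

lemma euclid_sum_coord {ι : Type*} {n : ℕ} (s : Finset ι) (f : ι → EuclideanSpace ℝ (Fin n))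
    (i : Fin n) : (∑ k ∈ s, f k) i = ∑ k ∈ s, f k i := by
  classical
  induction s using Finset.induction with
  | empty => rfl
  | insert _ _ hnot ih =>
    rw [Finset.sum_insert hnot, Finset.sum_insert hnot, ← ih]
    rfl

open scoped Matrix in
lemma cont_integrand {n : ℕ} (A : Matrix (Fin n) (Fin n) ℝ) (dt : ℝ)
    (u0 : EuclideanSpace ℝ (Fin n)) :
    Continuous fun θ : ℝ => mvE (mexp ((dt - θ) • A)) u0 := by
  letI : NormedAddCommGroup (Matrix (Fin n) (Fin n) ℝ) := Matrix.linftyOpNormedAddCommGroup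
  letI : NormedRing (Matrix (Fin n) (Fin n) ℝ) := Matrix.linftyOpNormedRing
  letI : NormedAlgebra ℝ (Matrix (Fin n) (Fin n) ℝ) := Matrix.linftyOpNormedAlgebra
  have h1 : Continuous fun θ : ℝ => mexp ((dt - θ) • A) := by
    exact (continuous_iff_continuousAt.2 fun x => (NormedSpace.exp_analytic (𝕂 := ℝ) x).continuousAt).comp
      ((continuous_const.sub continuous_id).smul continuous_const)
  let L : Matrix (Fin n) (Fin n) ℝ →ₗ[ℝ] EuclideanSpace ℝ (Fin n) :=
    { toFun := fun M => mvE M u0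
      map_add' := fun a b => by simp [mvE, map_add, LinearMap.add_apply]
      map_smul' := fun c a => by simp [mvE, map_smul, LinearMap.smul_apply] }
  have h2 : Continuous L := L.continuous_of_finiteDimensional
  exact h2.comp h1

lemma integral_const_ctrl {n : ℕ} (A : Matrix (Fin n) (Fin n) ℝ) {dt : ℝ} (hdt : 0 < dt)
    (η : ℕ) (u0 : EuclideanSpace ℝ (Fin n)) :
    (∫ θ in (0:ℝ)..dt, mvE (mexp ((dt - θ) • A)) u0)
      = (∑ k ∈ Finset.range (η+1), mvE (Atilde A dt k) u0) + dt • mvE (Mrem A dt η) u0 := by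
  have hcont := cont_integrand A dt u0
  have hII : IntervalIntegrable (fun θ : ℝ => mvE (mexp ((dt - θ) • A)) u0)
      MeasureTheory.volume 0 dt := hcont.intervalIntegrable _ _
  refine PiLp.ext fun i => ?_
  have hproj := (EuclideanSpace.proj (𝕜 := ℝ) i).intervalIntegral_comp_comm hII
  have hlhs : (∫ θ in (0:ℝ)..dt, mvE (mexp ((dt - θ) • A)) u0) i
      = ∫ θ in (0:ℝ)..dt, (mvE (mexp ((dt - θ) • A)) u0) i := by
    exact hproj.symm
  rw [hlhs]
  have hco : ∀ θ : ℝ, (mvE (mexp ((dt - θ) • A)) u0) i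
      = ∑ j, mexp ((dt - θ) • A) i j * u0 j := fun θ => mvE_apply' _ _ _
  rw [intervalIntegral.integral_congr (fun θ _ => hco θ)]
  have hint : ∀ j : Fin n, IntervalIntegrable
      (fun θ : ℝ => mexp ((dt - θ) • A) i j * u0 j) MeasureTheory.volume 0 dt := by
    intro j
    exact ((cont_entry A dt i j).mul continuous_const).intervalIntegrable _ _
  rw [intervalIntegral.integral_finset_sum (fun j _ => hint j)]
  have hterm : ∀ j : Fin n, (∫ θ in (0:ℝ)..dt, mexp ((dt - θ) • A) i j * u0 j)
      = ((∑ k ∈ Finset.range (η+1), Atilde A dt k i j) + dt * Mrem A dt η i j) * u0 j := by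
    intro j
    rw [intervalIntegral.integral_mul_const]
    congr 1
    have hsub : (∫ θ in (0:ℝ)..dt, mexp ((dt - θ) • A) i j)
        = ∫ σ in (0:ℝ)..dt, mexp (σ • A) i j := by
      have := intervalIntegral.integral_comp_sub_left (a := (0:ℝ)) (b := dt)
        (fun σ => mexp (σ • A) i j) dt
      simpa using this
    rw [hsub, key_integral A hdt i j, tsum_split A dt η i j]
    congr 1
  rw [Finset.sum_congr rfl (fun j _ => hterm j)]
  have hrhs : ((∑ k ∈ Finset.range (η+1), mvE (Atilde A dt k) u0)
        + dt • mvE (Mrem A dt η) u0) i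
      = (∑ k ∈ Finset.range (η+1), ∑ j, Atilde A dt k i j * u0 j)
        + dt * ∑ j, Mrem A dt η i j * u0 j := by
    have h1 : ∀ (x y : EuclideanSpace ℝ (Fin n)), (x + y) i = x i + y i := fun _ _ => rfl
    have h2 : (dt • mvE (Mrem A dt η) u0) i = dt * (mvE (Mrem A dt η) u0) i := rfl
    rw [h1, h2, euclid_sum_coord, mvE_apply']
    congr 1
  rw [hrhs]
  calc ∑ j, (∑ k ∈ Finset.range (η+1), Atilde A dt k i j + dt * Mrem A dt η i j) * u0 j
      = ∑ j, ((∑ k ∈ Finset.range (η+1), Atilde A dt k i j * u0 j)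
          + dt * (Mrem A dt η i j * u0 j)) := by
        apply Finset.sum_congr rfl
        intro j _
        rw [add_mul, Finset.sum_mul]
        ring
    _ = (∑ j, ∑ k ∈ Finset.range (η+1), Atilde A dt k i j * u0 j)
          + ∑ j, dt * (Mrem A dt η i j * u0 j) := Finset.sum_add_distrib
    _ = (∑ k ∈ Finset.range (η+1), ∑ j, Atilde A dt k i j * u0 j)
          + dt * ∑ j, Mrem A dt η i j * u0 j := by
        rw [Finset.sum_comm, Finset.mul_sum]

/-! #### err, box and boundedness -/

lemma err_nonneg {n : ℕ} (S : Set (EuclideanSpace ℝ (Fin n))) : 0 ≤ err S :=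
  Real.sSup_nonneg (by rintro x ⟨y, _, rfl⟩; exact norm_nonneg _)

def Bdd {n : ℕ} (S : Set (EuclideanSpace ℝ (Fin n))) : Prop :=
  ∃ R : ℝ, 0 ≤ R ∧ ∀ x ∈ S, ‖x‖ ≤ R

lemma norm_le_err {n : ℕ} {S : Set (EuclideanSpace ℝ (Fin n))} (hS : Bdd S)
    {s : EuclideanSpace ℝ (Fin n)} (hs : s ∈ S) : ‖s‖ ≤ err S := by
  obtain ⟨R, hR0, hR⟩ := hS
  have hne : ∀ i : Fin n, ((fun y => y i) '' S).Nonempty := fun i => ⟨s i, s, hs, rfl⟩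
  have hbdda : ∀ i : Fin n, ∀ z ∈ (fun y : EuclideanSpace ℝ (Fin n) => y i) '' S, z ≤ R := by
    rintro i z ⟨y, hy, rfl⟩
    exact (le_abs_self _).trans ((abs_coord_le_norm y i).trans (hR y hy))
  have hbddb : ∀ i : Fin n, ∀ z ∈ (fun y : EuclideanSpace ℝ (Fin n) => y i) '' S, -R ≤ z := by
    rintro i z ⟨y, hy, rfl⟩
    have := (abs_coord_le_norm y i).trans (hR y hy)
    rw [abs_le] at this; exact this.1
  have hmem : s ∈ box S := by
    intro i
    constructor
    · exact csInf_le ⟨-R, fun z hz => hbddb i z hz⟩ ⟨s, hs, rfl⟩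
    · exact le_csSup ⟨R, fun z hz => hbdda i z hz⟩ ⟨s, hs, rfl⟩
  have hbox : ∀ x ∈ box S, ‖x‖ ≤ (n : ℝ) * R := by
    intro x hx
    have hcoord : ∀ i, |x i| ≤ R := by
      intro i
      have h1 := (hx i).1
      have h2 := (hx i).2
      have hIa : -R ≤ sInf ((fun y : EuclideanSpace ℝ (Fin n) => y i) '' S) :=
        le_csInf (hne i) (hbddb i)
      have hIb : sSup ((fun y : EuclideanSpace ℝ (Fin n) => y i) '' S) ≤ R :=
        csSup_le (hne i) (hbdda i)
      rw [abs_le]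
      exact ⟨hIa.trans h1, h2.trans hIb⟩
    calc ‖x‖ ≤ ∑ i, |x i| := norm_le_sum_abs x
      _ ≤ ∑ _i : Fin n, R := Finset.sum_le_sum fun i _ => hcoord i
      _ = (n : ℝ) * R := by simp [mul_comm]
  exact le_csSup ⟨(n:ℝ) * R, by rintro z ⟨y, hy, rfl⟩; exact hbox y hy⟩ ⟨s, hmem, rfl⟩

lemma Bdd.add' {n : ℕ} {S T : Set (EuclideanSpace ℝ (Fin n))} (hS : Bdd S) (hT : Bdd T) :
    Bdd (S + T) := by
  obtain ⟨R1, h10, h1⟩ := hS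
  obtain ⟨R2, h20, h2⟩ := hT
  refine ⟨R1 + R2, by linarith, ?_⟩
  rintro x hx
  rw [Set.mem_add] at hx
  obtain ⟨a, ha, b, hb, rfl⟩ := hx
  calc ‖a + b‖ ≤ ‖a‖ + ‖b‖ := norm_add_le _ _
    _ ≤ R1 + R2 := add_le_add (h1 a ha) (h2 b hb)

lemma Bdd.zero' {n : ℕ} : Bdd (0 : Set (EuclideanSpace ℝ (Fin n))) :=
  ⟨0, le_refl _, by rintro x hx; rw [Set.mem_zero] at hx; simp [hx]⟩

lemma Bdd.finsetSum {ι : Type*} {n : ℕ} (s : Finset ι)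
    (f : ι → Set (EuclideanSpace ℝ (Fin n))) (h : ∀ i ∈ s, Bdd (f i)) :
    Bdd (∑ i ∈ s, f i) :=
  Finset.sum_induction f Bdd (fun _ _ => Bdd.add') Bdd.zero' h

lemma Bdd.imgM' {m n : ℕ} (M : Matrix (Fin m) (Fin n) ℝ) {S : Set (EuclideanSpace ℝ (Fin n))}
    (hS : Bdd S) : Bdd (imgM M S) := by
  obtain ⟨R, hR0, hR⟩ := hS
  refine ⟨(∑ i, ∑ j, |M i j|) * R, by positivity, ?_⟩
  rintro x ⟨y, hy, rfl⟩
  calc ‖mvE M y‖ ≤ (∑ i, ∑ j, |M i j|) * ‖y‖ := mvE_norm_le M y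
    _ ≤ (∑ i, ∑ j, |M i j|) * R :=
        mul_le_mul_of_nonneg_left (hR y hy) (by positivity)

lemma Bdd_zono {n m : ℕ} (Gu : Matrix (Fin n) (Fin m) ℝ) : Bdd (zono 0 Gu) := by
  refine ⟨(∑ i, ∑ j, |Gu i j|) * m, by positivity, ?_⟩
  rintro x ⟨α, hα, rfl⟩
  have hnα : ‖α‖ ≤ (m : ℝ) := by
    calc ‖α‖ ≤ ∑ i, |α i| := norm_le_sum_abs α
      _ ≤ ∑ _i : Fin m, (1:ℝ) := Finset.sum_le_sum fun i _ => abs_le.mpr ⟨(hα i).1, (hα i).2⟩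
      _ = (m : ℝ) := by simp
  rw [zero_add]
  calc ‖mvE Gu α‖ ≤ (∑ i, ∑ j, |Gu i j|) * ‖α‖ := mvE_norm_le Gu α
    _ ≤ (∑ i, ∑ j, |Gu i j|) * m :=
        mul_le_mul_of_nonneg_left hnα (by positivity)

lemma Bdd_Dset {n : ℕ} (A : Matrix (Fin n) (Fin n) ℝ) {dt : ℝ} (hdt : 0 ≤ dt) (η : ℕ)
    {U0 : Set (EuclideanSpace ℝ (Fin n))} (hU : Bdd U0) : Bdd (Dset A dt η U0) := by
  obtain ⟨R, hR0, hR⟩ := hU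
  refine ⟨dt * ((∑ i, ∑ j, Eexp A dt η i j) * R), ?_, ?_⟩
  · have : 0 ≤ ∑ i, ∑ j, Eexp A dt η i j :=
      Finset.sum_nonneg fun i _ => Finset.sum_nonneg fun j _ => Eexp_entry_nonneg A hdt η i j
    positivity
  rintro x ⟨M, hM, u, hu, rfl⟩
  rw [norm_smul, Real.norm_eq_abs, abs_of_nonneg hdt]
  apply mul_le_mul_of_nonneg_left _ hdt
  calc ‖mvE M u‖ ≤ (∑ i, ∑ j, |M i j|) * ‖u‖ := mvE_norm_le M u
    _ ≤ (∑ i, ∑ j, Eexp A dt η i j) * R := by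
        apply mul_le_mul
        · exact Finset.sum_le_sum fun i _ => Finset.sum_le_sum fun j _ => hM i j
        · exact hR u hu
        · exact norm_nonneg _
        · exact Finset.sum_nonneg fun i _ => Finset.sum_nonneg fun j _ =>
            (abs_nonneg _).trans (hM i j)

/-! #### membership in finset-indexed Minkowski sums -/

lemma mem_finsetSum_sets {ι : Type*} [DecidableEq ι] {n : ℕ} {s : Finset ι}
    {f : ι → Set (EuclideanSpace ℝ (Fin n))} {x : EuclideanSpace ℝ (Fin n)}
    (hx : x ∈ ∑ i ∈ s, f i) :
    ∃ g : ι → EuclideanSpace ℝ (Fin n), (∀ i ∈ s, g i ∈ f i) ∧ x = ∑ i ∈ s, g i := by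
  induction s using Finset.induction generalizing x with
  | empty =>
    refine ⟨fun _ => 0, by simp, ?_⟩
    simpa [Set.mem_zero] using hx
  | @insert a t hnot ih =>
    rw [Finset.sum_insert hnot, Set.mem_add] at hx
    obtain ⟨u, hu, v, hv, rfl⟩ := hx
    obtain ⟨g, hg, rfl⟩ := ih hv
    refine ⟨fun i => if i = a then u else g i, ?_, ?_⟩
    · intro i hi
      rcases Finset.mem_insert.mp hi with rfl | hi'
      · simp [hu]
      · have hne : i ≠ a := fun h => hnot (h ▸ hi')
        simp [hne, hg i hi']
    · rw [Finset.sum_insert hnot]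
      simp only [if_pos rfl]
      congr 1
      apply Finset.sum_congr rfl
      intro i hi
      have hne : i ≠ a := fun h => hnot (h ▸ hi)
      simp [hne]

lemma finsetSum_mem_sets {ι : Type*} {n : ℕ} {s : Finset ι}
    {f : ι → Set (EuclideanSpace ℝ (Fin n))} {g : ι → EuclideanSpace ℝ (Fin n)}
    (hg : ∀ i ∈ s, g i ∈ f i) : (∑ i ∈ s, g i) ∈ ∑ i ∈ s, f i := by
  classical
  induction s using Finset.induction with
  | empty => simp [Set.mem_zero]
  | @insert a t hnot ih =>
    rw [Finset.sum_insert hnot, Finset.sum_insert hnot]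
    exact Set.add_mem_add (hg a (Finset.mem_insert_self a t))
      (ih fun i hi => hg i (Finset.mem_insert_of_mem hi))

end Aux

/-- one-step error bound for the particular solution enclosure. -/
theorem PU_one_step_error {n m : ℕ} (Gu : Matrix (Fin n) (Fin m) ℝ)
    (A : Matrix (Fin n) (Fin n) ℝ) (t : ℝ) (ht : 0 ≤ t)
    (dt : ℝ) (hdt : 0 < dt) (η : ℕ) (hη : 1 ≤ η)
    (hsub : PU (zono 0 Gu) A dt ⊆ PhatSet A dt η (zono 0 Gu)) :
    Metric.hausdorffDist (imgM (mexp (t • A)) (PU (zono 0 Gu) A dt))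
        (imgM (mexp (t • A)) (PhatSet A dt η (zono 0 Gu))) ≤
      ehatStep A t η (zono 0 Gu) dt := by
  classical
  set U0 := zono (0 : EuclideanSpace ℝ (Fin n)) Gu with hU0
  set P := mexp (t • A) with hP
  have h0U : (0 : EuclideanSpace ℝ (Fin n)) ∈ U0 := by
    refine ⟨0, fun i => ⟨by norm_num, by norm_num⟩, ?_⟩
    have : mvE Gu (0 : EuclideanSpace ℝ (Fin m)) = 0 := mvE_zero_vec Gu
    rw [this, add_zero]
  have hBU : Bdd U0 := Bdd_zono Gu
  have hBD : Bdd (Dset A dt η U0) := Bdd_Dset A hdt.le η hBU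
  have hB1 : Bdd (imgM P (imgM (∑ i ∈ Finset.Icc 1 η, Atilde A dt i) U0 + Dset A dt η U0)) :=
    Bdd.imgM' P (Bdd.add' (Bdd.imgM' _ hBU) hBD)
  have hB2 : Bdd (imgM P ((∑ i ∈ Finset.Icc 1 η, imgM (Atilde A dt i) U0)
      + Dset A dt η U0)) :=
    Bdd.imgM' P (Bdd.add' (Bdd.finsetSum _ _ fun i _ => Bdd.imgM' _ hBU) hBD)
  have hr : 0 ≤ ehatStep A t η U0 dt := add_nonneg (err_nonneg _) (err_nonneg _)
  apply Metric.hausdorffDist_le_of_mem_dist hr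
  · intro x hx
    exact ⟨x, Set.image_mono hsub hx, by simpa using hr⟩
  · rintro y ⟨yr, hyr, rfl⟩
    obtain ⟨sv, hsv, d, hd, hsd⟩ := Set.mem_add.mp hyr
    obtain ⟨g, hg, hgsum⟩ := mem_finsetSum_sets hsv
    have h0mem : (0:ℕ) ∈ Finset.range (η+1) := Finset.mem_range.mpr (Nat.succ_pos η)
    obtain ⟨u0, hu0, hgu0⟩ := hg 0 h0mem
    -- the matching element of PU
    set xr := ∫ θ in (0:ℝ)..dt, mvE (mexp ((dt - θ) • A)) u0 with hxrdef
    have hxPU : xr ∈ PU U0 A dt := ⟨fun _ => u0, measurable_const, fun θ _ => hu0, rfl⟩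
    refine ⟨mvE P xr, ⟨xr, hxPU, rfl⟩, ?_⟩
    -- split the index range
    have hins : Finset.range (η+1) = insert 0 (Finset.Icc 1 η) := by
      ext a
      simp only [Finset.mem_range, Finset.mem_insert, Finset.mem_Icc]
      omega
    have hnotin : (0:ℕ) ∉ Finset.Icc 1 η := by simp
    -- decompose xr
    have hxr : xr = mvE (Atilde A dt 0) u0
        + ((∑ i ∈ Finset.Icc 1 η, mvE (Atilde A dt i) u0)
          + dt • mvE (Mrem A dt η) u0) := by
      rw [hxrdef, integral_const_ctrl A hdt η u0, hins, Finset.sum_insert hnotin, add_assoc]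
    -- decompose yr
    have hyr2 : yr = mvE (Atilde A dt 0) u0 + ((∑ i ∈ Finset.Icc 1 η, g i) + d) := by
      rw [← hsd, hgsum, hins, Finset.sum_insert hnotin, ← hgu0, add_assoc]
    -- the two difference vectors
    set p : EuclideanSpace ℝ (Fin n) := (∑ i ∈ Finset.Icc 1 η, g i) + d with hpdef
    set q : EuclideanSpace ℝ (Fin n) := (∑ i ∈ Finset.Icc 1 η, mvE (Atilde A dt i) u0)
      + dt • mvE (Mrem A dt η) u0 with hqdef
    have hdiff : yr - xr = p - q := by rw [hyr2, hxr]; abel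
    have hdist : dist (mvE P yr) (mvE P xr) = ‖mvE P p - mvE P q‖ := by
      rw [dist_eq_norm, ← mvE_sub, ← mvE_sub, hdiff]
    rw [hdist]
    -- memberships
    have hpmem : mvE P p ∈ imgM P ((∑ i ∈ Finset.Icc 1 η, imgM (Atilde A dt i) U0)
        + Dset A dt η U0) := by
      refine ⟨p, ?_, rfl⟩
      rw [hpdef]
      exact Set.add_mem_add (finsetSum_mem_sets fun i hi => hg i (by
        rw [hins]; exact Finset.mem_insert_of_mem hi)) hd
    have hqmem : mvE P q ∈ imgM P (imgM (∑ i ∈ Finset.Icc 1 η, Atilde A dt i) U0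
        + Dset A dt η U0) := by
      refine ⟨q, ?_, rfl⟩
      rw [hqdef]
      apply Set.add_mem_add
      · exact ⟨u0, hu0, mvE_matsum _ _ _⟩
      · exact ⟨Mrem A dt η, fun i j => Mrem_abs_le A hdt.le η i j, u0, hu0, rfl⟩
    calc ‖mvE P p - mvE P q‖ ≤ ‖mvE P p‖ + ‖mvE P q‖ := norm_sub_le _ _
      _ ≤ err (imgM P ((∑ i ∈ Finset.Icc 1 η, imgM (Atilde A dt i) U0) + Dset A dt η U0))
          + err (imgM P (imgM (∑ i ∈ Finset.Icc 1 η, Atilde A dt i) U0 + Dset A dt η U0)) :=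
          add_le_add (norm_le_err hB2 hpmem) (norm_le_err hB1 hqmem)
      _ = ehatStep A t η U0 dt := by rw [ehatStep]; ring
end
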